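/- If a choice function has a maximizer-collecting rationalization (its choice from each set S is the union over a finite family of linear orders of the maximum element of S under each order), then it is path independent. -/

import Mathlib

lemma exists_max_of_linear {E : Type*} (r : E → E → Prop) (hr : IsLinearOrder E r)
    (S : Finset E) (hS : S.Nonempty) : ∃ a ∈ S, ∀ b ∈ S, r a b := by
  classical
  induction S using Finset.induction_on with
  | empty => exact absurd hS (by simp)
  | @insert x s hx ih =>
    rcases s.eq_empty_or_nonempty with h | h
    · subst h
      refine ⟨x, by simp, ?_⟩
      intro b hb
      simp only [Finset.mem_insert, Finset.notMem_empty, or_false] at hb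
      subst hb
      exact (hr.toTotal.total b b).elim id id
    · obtain ⟨a, ha, hmax⟩ := ih h
      rcases hr.toTotal.total a x with hax | hxa
      · refine ⟨a, Finset.mem_insert_of_mem ha, ?_⟩
        intro b hb
        rcases Finset.mem_insert.1 hb with rfl | hb
        · exact hax
        · exact hmax b hb
      · refine ⟨x, Finset.mem_insert_self x s, ?_⟩
        intro b hb
        rcases Finset.mem_insert.1 hb with rfl | hb
        · exact (hr.toTotal.total b b).elim id id
        · exact hr.toIsTrans.trans _ _ _ hxa (hmax b hb)

/-- A choice function with a maximizer-collecting rationalization is path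
independent. -/
theorem pathIndependent_of_maximizerCollecting
    {E : Type*} [DecidableEq E] (C : Finset E → Finset E)
    (L : List (E → E → Prop))
    (hL : ∀ r ∈ L, IsLinearOrder E r)
    (hempty : C ∅ = ∅)
    (hMC : ∀ S : Finset E, S.Nonempty →
      ∀ a : E, a ∈ C S ↔ ∃ r ∈ L, a ∈ S ∧ ∀ b ∈ S, r a b) :
    ∀ S T, C (S ∪ T) = C (C S ∪ C T) := by
  classical
  have hsub : ∀ S : Finset E, C S ⊆ S := by
    intro S a ha
    rcases S.eq_empty_or_nonempty with h | h
    · subst h; rw [hempty] at ha; exact absurd ha (by simp)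
    · obtain ⟨r, _, haS, _⟩ := (hMC S h a).1 ha; exact haS
  intro S T
  by_cases hLnil : L = []
  · have hC : ∀ U : Finset E, C U = ∅ := by
      intro U
      rcases U.eq_empty_or_nonempty with h | h
      · subst h; exact hempty
      · ext a; simp [hMC U h a, hLnil]
    simp [hC]
  · rcases (S ∪ T).eq_empty_or_nonempty with h | h
    · have hS : S = ∅ := by
        have := Finset.union_eq_empty.1 h; exact this.1
      have hT : T = ∅ := (Finset.union_eq_empty.1 h).2
      simp [hS, hT, hempty]
    · have hCSne : ∀ U : Finset E, U.Nonempty → (C U).Nonempty := by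
        intro U hU
        obtain ⟨r, hr⟩ := List.exists_mem_of_ne_nil L hLnil
        obtain ⟨a, ha, hmax⟩ := exists_max_of_linear r (hL r hr) U hU
        exact ⟨a, (hMC U hU a).2 ⟨r, hr, ha, hmax⟩⟩
      have hCne : (C S ∪ C T).Nonempty := by
        obtain ⟨x, hx⟩ := h
        rcases Finset.mem_union.1 hx with h1 | h2
        · obtain ⟨a, ha⟩ := hCSne S ⟨x, h1⟩
          exact ⟨a, Finset.mem_union_left _ ha⟩
        · obtain ⟨a, ha⟩ := hCSne T ⟨x, h2⟩
          exact ⟨a, Finset.mem_union_right _ ha⟩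
      ext a
      rw [hMC _ h a, hMC _ hCne a]
      constructor
      · rintro ⟨r, hrL, haST, hmax⟩
        refine ⟨r, hrL, ?_, ?_⟩
        · rcases Finset.mem_union.1 haST with hS' | hT'
          · exact Finset.mem_union_left _ ((hMC S ⟨a, hS'⟩ a).2
              ⟨r, hrL, hS', fun b hb => hmax b (Finset.mem_union_left _ hb)⟩)
          · exact Finset.mem_union_right _ ((hMC T ⟨a, hT'⟩ a).2
              ⟨r, hrL, hT', fun b hb => hmax b (Finset.mem_union_right _ hb)⟩)
        · intro b hb
          rcases Finset.mem_union.1 hb with h1 | h2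
          · exact hmax b (Finset.mem_union_left _ (hsub S h1))
          · exact hmax b (Finset.mem_union_right _ (hsub T h2))
      · rintro ⟨r, hrL, haC, hmax⟩
        have hlin := hL r hrL
        have haST : a ∈ S ∪ T := by
          rcases Finset.mem_union.1 haC with h1 | h2
          · exact Finset.mem_union_left _ (hsub S h1)
          · exact Finset.mem_union_right _ (hsub T h2)
        refine ⟨r, hrL, haST, ?_⟩
        intro b hb
        rcases Finset.mem_union.1 hb with h1 | h2
        · have hSne : S.Nonempty := ⟨b, h1⟩
          obtain ⟨m, hm, hmm⟩ := exists_max_of_linear r hlin S hSne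
          have hmC : m ∈ C S := (hMC S hSne m).2 ⟨r, hrL, hm, hmm⟩
          exact hlin.toIsTrans.trans _ _ _
            (hmax m (Finset.mem_union_left _ hmC)) (hmm b h1)
        · have hTne : T.Nonempty := ⟨b, h2⟩
          obtain ⟨m, hm, hmm⟩ := exists_max_of_linear r hlin T hTne
          have hmC : m ∈ C T := (hMC T hTne m).2 ⟨r, hrL, hm, hmm⟩
          exact hlin.toIsTrans.trans _ _ _
            (hmax m (Finset.mem_union_right _ hmC)) (hmm b h2)
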